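/- Let T := [T_1,...,T_n] be a row contraction on H, D_T := (I − T*T)^{1/2} on ⊕_{j=1}^n H, D := closure of the range of D_T, and define on K := H ⊕ (F²(H_n) ⊗ D) the operators V_i(h ⊕ ξ) := T_i h ⊕ (D_i h + (S_i ⊗ I_D)ξ), where D_i h := 1 ⊗ D_T(0,...,0,h,0,...) with h in the i-th slot. Then the V_i are isometries with pairwise orthogonal ranges: V_i* V_j = δ_{ij} I_K. -/

import Mathlib

set_option synthInstance.maxHeartbeats 1000000
set_option maxHeartbeats 1000000

noncomputable section

open scoped InnerProductSpace

variable {n : ℕ} {H : Type*} [NormedAddCommGroup H] [InnerProductSpace ℂ H]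
  [CompleteSpace H]

/-- `⊕_{j=1}^n H`, the Hilbert direct sum of `n` copies of `H`. -/
abbrev HilbPow (n : ℕ) (H : Type*) [NormedAddCommGroup H] [InnerProductSpace ℂ H] :=
  PiLp 2 (fun _ : Fin n => H)

/-- `D := closure of the range of D_T` in `⊕_{j=1}^n H`. -/
def Dsub (DT : HilbPow n H →L[ℂ] HilbPow n H) : Submodule ℂ (HilbPow n H) :=
  (LinearMap.range (DT : HilbPow n H →ₗ[ℂ] HilbPow n H)).topologicalClosure

instance : CompleteSpace (HilbPow n H) :=
  inferInstance

instance (DT : HilbPow n H →L[ℂ] HilbPow n H) : CompleteSpace ↥(Dsub DT) :=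
  IsClosed.completeSpace_coe (hs := Submodule.isClosed_topologicalClosure _)

/-- The canonical map `x ↦ D_T x ∈ D`. -/
def Dembed (DT : HilbPow n H →L[ℂ] HilbPow n H) (x : HilbPow n H) : ↥(Dsub DT) :=
  ⟨DT x, Submodule.le_topologicalClosure _ ⟨x, rfl⟩⟩

/-- `K := H ⊕ (F²(H_n) ⊗ D)`, where `F²(H_n) ⊗ D` is realized as `ℓ²(F_n^+; D)`. -/
abbrev DilSpace (DT : HilbPow n H →L[ℂ] HilbPow n H) :=
  WithLp 2 (H × lp (fun _ : List (Fin n) => ↥(Dsub DT)) 2)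

/-- The operators of the Fock-space realization of the minimal isometric dilation of a
row contraction `T`, namely `V_i (h ⊕ ξ) := T_i h ⊕ (D_i h + (S_i ⊗ I_D) ξ)` with
`D_T = (I − T*T)^{1/2}`, are isometries with pairwise orthogonal ranges:
`V_i* V_j = δ_{ij} I_K`. -/
theorem dilation_isometries_orthogonal_ranges
    (T : Fin n → H →L[ℂ] H)
    (hrow : ∀ h : H, ∑ i, ‖ContinuousLinearMap.adjoint (T i) h‖ ^ 2 ≤ ‖h‖ ^ 2)
    (DT : HilbPow n H →L[ℂ] HilbPow n H) (hDTpos : DT.IsPositive)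
    (hDTsq : ∀ (x : HilbPow n H) (i : Fin n),
      (DT (DT x)) i = x i - ContinuousLinearMap.adjoint (T i) (∑ j, T j (x j)))
    (V : Fin n → DilSpace DT →L[ℂ] DilSpace DT)
    (hV : ∀ (i : Fin n) (h : H) (ξ : lp (fun _ : List (Fin n) => ↥(Dsub DT)) 2),
      (WithLp.equiv 2 _ (V i ((WithLp.equiv 2 _).symm (h, ξ)))).1 = T i h ∧
      ((WithLp.equiv 2 _ (V i ((WithLp.equiv 2 _).symm (h, ξ)))).2 :
          ∀ _ : List (Fin n), ↥(Dsub DT)) []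
        = Dembed DT ((WithLp.equiv 2 (∀ _ : Fin n, H)).symm
            (fun j => if j = i then h else 0)) ∧
      ∀ (j : Fin n) (α : List (Fin n)),
        ((WithLp.equiv 2 _ (V i ((WithLp.equiv 2 _).symm (h, ξ)))).2 :
            ∀ _ : List (Fin n), ↥(Dsub DT)) (j :: α)
          = if j = i then (ξ : ∀ _ : List (Fin n), ↥(Dsub DT)) α else 0) :
    ∀ i j : Fin n,
      ContinuousLinearMap.adjoint (V i) ∘L V j = if i = j then 1 else 0 := by
  classical
  have hsa : ContinuousLinearMap.adjoint DT = DT := hDTpos.isSelfAdjoint.adjoint_eq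
  have key : ∀ (i j : Fin n) (x y : DilSpace DT),
      (inner ℂ (V i x) (V j y) : ℂ) = if i = j then (inner ℂ x y : ℂ) else 0 := by
    intro i j x y
    obtain ⟨⟨h, ξ⟩, rfl⟩ := (WithLp.equiv 2 _).symm.surjective x
    obtain ⟨⟨k, η⟩, rfl⟩ := (WithLp.equiv 2 _).symm.surjective y
    obtain ⟨hi1, hi2, hi3⟩ := hV i h ξ
    obtain ⟨hj1, hj2, hj3⟩ := hV j k η
    set A := V i ((WithLp.equiv 2 _).symm (h, ξ)) with hA
    set B := V j ((WithLp.equiv 2 _).symm (k, η)) with hB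
    rw [WithLp.equiv_apply, WithLp.ofLp_fst] at hi1 hj1
    rw [WithLp.equiv_apply, WithLp.ofLp_snd] at hi2 hi3 hj2 hj3
    -- the function summed over words
    set F : List (Fin n) → ℂ := fun α =>
      inner ℂ ((A.snd : ∀ _ : List (Fin n), ↥(Dsub DT)) α)
            ((B.snd : ∀ _ : List (Fin n), ↥(Dsub DT)) α) with hF
    have hFsummable : Summable F := lp.summable_inner A.snd B.snd
    have hsplit : (inner ℂ A.snd B.snd : ℂ) = F [] + ∑' α, if α = [] then 0 else F α := by
      rw [lp.inner_eq_tsum, ← hF, hFsummable.tsum_eq_add_tsum_ite ([] : List (Fin n))]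
    -- value at the empty word
    have hnil : F [] = (if i = j then (inner ℂ h k : ℂ) else 0) - inner ℂ (T i h) (T j k) := by
      have hu : ∀ m, ((WithLp.equiv 2 (∀ _ : Fin n, H)).symm
          (fun j' => if j' = i then h else 0) : HilbPow n H) m = if m = i then h else 0 :=
        fun m => rfl
      have hv : ∀ m, ((WithLp.equiv 2 (∀ _ : Fin n, H)).symm
          (fun j' => if j' = j then k else 0) : HilbPow n H) m = if m = j then k else 0 :=
        fun m => rfl
      set u : HilbPow n H := (WithLp.equiv 2 (∀ _ : Fin n, H)).symm
        (fun j' => if j' = i then h else 0)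
      set v : HilbPow n H := (WithLp.equiv 2 (∀ _ : Fin n, H)).symm
        (fun j' => if j' = j then k else 0)
      have h1 : F [] = (inner ℂ (DT u) (DT v) : ℂ) := by
        simp only [hF, hi2, hj2]
        rfl
      have h2 : (inner ℂ (DT u) (DT v) : ℂ) = inner ℂ u (DT (DT v)) := by
        have h2' := ContinuousLinearMap.adjoint_inner_left DT (DT v) u
        rw [hsa] at h2'
        exact h2'
      have hsumv : (∑ m, T m (v m)) = T j k := by
        rw [Finset.sum_eq_single j]
        · rw [hv, if_pos rfl]
        · intro m _ hm
          rw [hv, if_neg hm, map_zero]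
        · intro hj'; exact absurd (Finset.mem_univ j) hj'
      have h3 : (inner ℂ u (DT (DT v)) : ℂ) = inner ℂ h ((DT (DT v)) i) := by
        rw [PiLp.inner_apply, Finset.sum_eq_single i]
        · rw [hu, if_pos rfl]
        · intro m _ hm
          rw [hu, if_neg hm, inner_zero_left]
        · intro hi'; exact absurd (Finset.mem_univ i) hi'
      rw [h1, h2, h3, hDTsq v i, hsumv, hv, inner_sub_right,
        ContinuousLinearMap.adjoint_inner_right]
      congr 1
      by_cases hij : i = j
      · rw [if_pos hij, if_pos hij]
      · rw [if_neg hij, if_neg hij, inner_zero_right]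
    -- the first components
    have hfst : (inner ℂ A.fst B.fst : ℂ) = inner ℂ (T i h) (T j k) := by rw [hi1, hj1]
    have hxy : (inner ℂ ((WithLp.equiv 2 _).symm (h, ξ) : DilSpace DT)
        ((WithLp.equiv 2 _).symm (k, η)) : ℂ) = inner ℂ h k + inner ℂ ξ η := by
      rw [WithLp.prod_inner_apply, WithLp.equiv_symm_apply, WithLp.ofLp_toLp,
        WithLp.ofLp_toLp]
    rw [WithLp.prod_inner_apply, WithLp.ofLp_fst, WithLp.ofLp_fst, WithLp.ofLp_snd,
      WithLp.ofLp_snd, hfst, hsplit, hnil, hxy]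
    by_cases hij : i = j
    · subst hij
      rw [if_pos rfl, if_pos rfl]
      have htail : (∑' α, if α = [] then 0 else F α) = (inner ℂ ξ η : ℂ) := by
        have hinj : Function.Injective (List.cons i : List (Fin n) → List (Fin n)) :=
          fun a b hab => (List.cons.injEq _ _ _ _ ▸ hab).2
        have h0 : Function.support (fun α => if α = [] then 0 else F α)
            ⊆ Set.range (List.cons i : List (Fin n) → List (Fin n)) := by
          rintro (_ | ⟨l, α⟩) hx
          · simp at hx
          · by_cases hl : l = i
            · exact ⟨α, by rw [hl]⟩
            · exfalso
              apply hx
              simp only [hF, reduceCtorEq, if_neg, hi3 l α, if_neg hl, inner_zero_left]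
              simp
        have := Function.Injective.tsum_eq hinj
          (f := fun α => if α = [] then 0 else F α) h0
        rw [← this, lp.inner_eq_tsum]
        refine tsum_congr fun α => ?_
        simp [hF, hi3 i α, hj3 i α]
      rw [htail]
      ring
    · rw [if_neg hij, if_neg hij]
      have htail : (∑' α, if α = [] then 0 else F α) = 0 := by
        have : (fun α => if α = [] then 0 else F α) = fun _ => (0 : ℂ) := by
          funext α
          rcases α with _ | ⟨l, α⟩
          · simp
          · by_cases hl : l = i
            · have hl' : l ≠ j := by rw [hl]; exact hij
              simp [hF, hj3 l α, hl']
            · simp [hF, hi3 l α, hl]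
        rw [this, tsum_zero]
      rw [htail]
      ring
  intro i j
  ext x
  apply ext_inner_left ℂ
  intro v
  rw [ContinuousLinearMap.comp_apply, ContinuousLinearMap.adjoint_inner_right, key]
  by_cases hij : i = j
  · simp [hij]
  · simp [hij]

end
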